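/- Let G be a finite group with trivial Frattini subgroup. If every abnormal maximal subgroup of G contains the socle Soc(G) (the subgroup generated by all minimal normal subgroups of G), then G is nilpotent. -/

import Mathlib

open Subgroup Pointwise

/-- `H` is a normal subgroup of `K` (both viewed as subgroups of the ambient group `G`). -/
def NormalIn {G : Type*} [Group G] (H K : Subgroup G) : Prop :=
  H ≤ K ∧ ∀ k ∈ K, ∀ h ∈ H, k * h * k⁻¹ ∈ H

/-- `H` is subnormal in `K`: there is a chain `H = c 0 ⊴ c 1 ⊴ ... ⊴ c n = K`. -/
def SubnormalIn {G : Type*} [Group G] (H K : Subgroup G) : Prop :=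
  ∃ (n : ℕ) (c : ℕ → Subgroup G), c 0 = H ∧ c n = K ∧ ∀ i < n, NormalIn (c i) (c (i + 1))

/-- The hypercenter: the limit of the upper central series. -/
def hypercenter (G : Type*) [Group G] : Subgroup G := ⨆ n, _root_.upperCentralSeries G n

/-- The nilpotent residual: the intersection of all normal subgroups with nilpotent quotient. -/
def nilpotentResidual (G : Type*) [Group G] : Subgroup G :=
  ⨅ N ∈ {N : Subgroup G |
    ∃ h : N.Normal, @Group.IsNilpotent (G ⧸ N) (@QuotientGroup.Quotient.group G _ N h)}, N

/-- The Fitting subgroup: the join of all normal nilpotent subgroups. -/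
def fitting (G : Type*) [Group G] : Subgroup G :=
  ⨆ N ∈ {N : Subgroup G | N.Normal ∧ Group.IsNilpotent N}, N

/-- `N` is a minimal normal subgroup. -/
def IsMinimalNormal {G : Type*} [Group G] (N : Subgroup G) : Prop :=
  N.Normal ∧ N ≠ ⊥ ∧ ∀ K : Subgroup G, K.Normal → K ≤ N → K = ⊥ ∨ K = N

/-- The socle: the join of all minimal normal subgroups. -/
def socle (G : Type*) [Group G] : Subgroup G :=
  ⨆ N ∈ {N : Subgroup G | IsMinimalNormal N}, N

/-- A group is supersolvable if it has a chain of normal subgroups with cyclic factors. -/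
def IsSupersolvable (G : Type*) [Group G] : Prop :=
  ∃ (n : ℕ) (c : ℕ → Subgroup G), c 0 = ⊥ ∧ c n = ⊤ ∧ (∀ i, (c i).Normal) ∧
    ∀ i < n, c i ≤ c (i + 1) ∧ ∃ g : G, c (i + 1) = c i ⊔ Subgroup.zpowers g

/-- A subgroup `H` is pronormal if `H` and each conjugate `H^g` are conjugate in their join. -/
def Pronormal {G : Type*} [Group G] (H : Subgroup G) : Prop :=
  ∀ g : G, ∃ x ∈ H ⊔ H.map (MulAut.conj g).toMonoidHom,
    H.map (MulAut.conj g).toMonoidHom = H.map (MulAut.conj x).toMonoidHom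

/-- A subgroup `H` is abnormal if `g ∈ ⟨H, H^g⟩` for all `g`. -/
def Abnormal {G : Type*} [Group G] (H : Subgroup G) : Prop :=
  ∀ g : G, g ∈ H ⊔ H.map (MulAut.conj g).toMonoidHom

/-- `Δ(G)`: the intersection of all abnormal maximal subgroups. -/
def abnormalDelta (G : Type*) [Group G] : Subgroup G :=
  ⨅ M ∈ {M : Subgroup G | IsCoatom M ∧ Abnormal M}, M

/-- The generalized Fitting subgroup `F̃(G)`: the preimage of `Soc(G/Φ(G))` in `G`. -/
def genFitting (G : Type*) [Group G] : Subgroup G :=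
  (socle (G ⧸ frattini G)).comap (QuotientGroup.mk' (frattini G))

/-- A group is `p`-decomposable if every `p`-element commutes with every `p'`-element. -/
def IsPDecomposable (p : ℕ) (K : Type*) [Group K] : Prop :=
  ∀ a b : K, (∃ n, orderOf a = p ^ n) → Nat.Coprime (orderOf b) p → Commute a b

section AuxLemmas

variable {G : Type*} [Group G]

lemma myNormal_of_le_center {H : Subgroup G} (hH : H ≤ Subgroup.center G) : H.Normal := by
  constructor
  intro x hx g
  have hc := (Subgroup.mem_center_iff.mp (hH hx)) g
  have : g * x * g⁻¹ = x := by rw [hc, mul_assoc, mul_inv_cancel, mul_one]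
  rwa [this]

lemma myEq_of_le_of_card [Finite G] {H K : Subgroup G} (hle : H ≤ K)
    (hc : Nat.card K ≤ Nat.card H) : H = K := by
  apply SetLike.coe_injective
  apply Set.eq_of_subset_of_ncard_le hle ?_ (Set.toFinite _)
  rw [← Nat.card_coe_set_eq, ← Nat.card_coe_set_eq]
  exact hc

lemma myExists_coatom_not_le [Finite G] (hΦ : frattini G = ⊥) {X : Subgroup G} (hX : X ≠ ⊥) :
    ∃ M : Subgroup G, IsCoatom M ∧ ¬ X ≤ M := by
  by_contra hcon
  push_neg at hcon
  have hXf : X ≤ frattini G := by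
    rw [frattini, Order.radical]
    exact le_iInf₂ hcon
  rw [hΦ] at hXf
  exact hX (le_bot_iff.mp hXf)

lemma myLe_socle {N : Subgroup G} (hN : IsMinimalNormal N) : N ≤ socle G :=
  le_iSup₂ (f := fun (K : Subgroup G) (_ : K ∈ {K : Subgroup G | IsMinimalNormal K}) => K) N hN

lemma mySocle_le {K : Subgroup G} (hK : ∀ N, IsMinimalNormal N → N ≤ K) : socle G ≤ K :=
  iSup₂_le hK

lemma myExists_minimal_normal_le [Finite G] {H : Subgroup G} (hn : H.Normal) (hne : H ≠ ⊥) :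
    ∃ N, IsMinimalNormal N ∧ N ≤ H := by
  obtain ⟨N, ⟨hNle, hNnormal, hNne⟩, hmin⟩ :=
    Set.Finite.exists_minimalFor id {K : Subgroup G | K ≤ H ∧ K.Normal ∧ K ≠ ⊥}
      (Set.toFinite _) ⟨H, le_rfl, hn, hne⟩
  refine ⟨N, ⟨hNnormal, hNne, ?_⟩, hNle⟩
  intro K hK hKN
  by_cases hKbot : K = ⊥
  · exact Or.inl hKbot
  · exact Or.inr (le_antisymm hKN (hmin ⟨hKN.trans hNle, hK, hKbot⟩ hKN))

lemma myAbnormal_of_coatom_not_normal [Finite G] {M : Subgroup G} (hM : IsCoatom M)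
    (hn : ¬ M.Normal) : Abnormal M := by
  intro g
  by_cases hg : M.map (MulAut.conj g).toMonoidHom = M
  · -- g normalizes M, and the normalizer of M is M
    have hgnorm : g ∈ Subgroup.normalizer (M : Set G) := by
      rw [Subgroup.mem_normalizer_iff]
      intro x
      constructor
      · intro hx
        have : (MulAut.conj g) x ∈ M.map (MulAut.conj g).toMonoidHom := ⟨x, hx, rfl⟩
        rw [hg] at this
        simpa [MulAut.conj_apply] using this
      · intro hx
        have : g * x * g⁻¹ ∈ M.map (MulAut.conj g).toMonoidHom := by rw [hg]; exact hx
        obtain ⟨m, hm, hme⟩ := this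
        simp only [MulEquiv.coe_toMonoidHom, MulAut.conj_apply] at hme
        have hmx : m = x := mul_left_cancel (mul_right_cancel hme)
        rwa [← hmx]
    have hNM : Subgroup.normalizer (M : Set G) = M := by
      rcases eq_or_lt_of_le M.le_normalizer with heq | hlt
      · exact heq.symm
      · exact absurd (Subgroup.normalizer_eq_top_iff.mp (hM.2 _ hlt)) hn
    exact Subgroup.mem_sup_left (hNM ▸ hgnorm)
  · have hne : M ⊔ M.map (MulAut.conj g).toMonoidHom ≠ M := by
      intro he
      apply hg
      have hle2 : M.map (MulAut.conj g).toMonoidHom ≤ M := by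
        conv_rhs => rw [← he]
        exact le_sup_right
      have hf : Function.Injective (MulAut.conj g).toMonoidHom := (MulAut.conj g).injective
      have hcard : Nat.card (M.map (MulAut.conj g).toMonoidHom) = Nat.card M :=
        (Nat.card_congr (Subgroup.equivMapOfInjective M _ hf).toEquiv).symm
      exact myEq_of_le_of_card hle2 hcard.ge
    have : M ⊔ M.map (MulAut.conj g).toMonoidHom = ⊤ :=
      hM.2 _ (lt_of_le_of_ne le_sup_left (Ne.symm hne))
    rw [this]; trivial

lemma myQuotient_comm {M : Subgroup G} (hM : IsCoatom M) [M.Normal]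
    (a b : G ⧸ M) : a * b = b * a := by
  have hsurj : Function.Surjective (QuotientGroup.mk' M) := QuotientGroup.mk'_surjective M
  have key : ∀ K : Subgroup (G ⧸ M), K = ⊥ ∨ K = ⊤ := by
    intro K
    have hc : M ≤ K.comap (QuotientGroup.mk' M) := by
      intro m hm
      have : QuotientGroup.mk' M m = 1 := (QuotientGroup.eq_one_iff m).mpr hm
      simp [Subgroup.mem_comap, this, Subgroup.one_mem]
    by_cases heq : K.comap (QuotientGroup.mk' M) = M
    · left
      have hmc := Subgroup.map_comap_eq_self_of_surjective hsurj K
      rw [← hmc, heq]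
      apply le_antisymm ?_ bot_le
      rintro x ⟨m, hm, rfl⟩
      simpa [Subgroup.mem_bot] using (QuotientGroup.eq_one_iff m).mpr hm
    · right
      have htop := hM.2 _ (lt_of_le_of_ne hc (Ne.symm heq))
      have hmc := Subgroup.map_comap_eq_self_of_surjective hsurj K
      rw [← hmc, htop]
      exact Subgroup.map_top_of_surjective _ hsurj
  by_cases ha : a = 1
  · simp [ha]
  by_cases hb : b = 1
  · simp [hb]
  have hza : Subgroup.zpowers a = ⊤ := by
    rcases key (Subgroup.zpowers a) with hbot | htop
    · exact absurd (Subgroup.zpowers_eq_bot.mp hbot) ha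
    · exact htop
  have : b ∈ Subgroup.zpowers a := by rw [hza]; trivial
  obtain ⟨k, hk⟩ := this
  rw [← hk]
  show a * a ^ k = a ^ k * a
  exact ((Commute.refl a).zpow_right k).eq

end AuxLemmas

theorem isNilpotent_of_abnormal_maximals_contain_socle {G : Type*} [Group G] [Finite G]
    (hΦ : frattini G = ⊥)
    (h : ∀ M : Subgroup G, IsCoatom M → Abnormal M → socle G ≤ M) :
    Group.IsNilpotent G := by
  classical
  -- Step 1: every minimal normal subgroup is central
  have hcent : ∀ N : Subgroup G, IsMinimalNormal N → N ≤ Subgroup.center G := by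
    intro N hN
    obtain ⟨hNnorm, hNbot, hNmin⟩ := hN
    obtain ⟨M, hM, hNM⟩ := myExists_coatom_not_le hΦ hNbot
    by_cases hMnorm : M.Normal
    · haveI := hMnorm
      haveI := hNnorm
      have hsup : N ⊔ M = ⊤ :=
        hM.2 _ (lt_of_le_of_ne le_sup_right (fun he => hNM (le_sup_left.trans he.ge)))
      have hinfnorm : (N ⊓ M).Normal := by
        constructor
        intro x hx g
        exact ⟨hNnorm.conj_mem x hx.1 g, hMnorm.conj_mem x hx.2 g⟩
      have hinf : N ⊓ M = ⊥ := by
        rcases hNmin (N ⊓ M) hinfnorm inf_le_left with h0 | h1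
        · exact h0
        · exact absurd (show N ≤ M by rw [← h1]; exact inf_le_right) hNM
      have hcomm : ∀ n ∈ N, ∀ m ∈ M, n * m = m * n := by
        intro n hn m hm
        have h1 : n * m * n⁻¹ * m⁻¹ ∈ N := by
          have hx : m * n⁻¹ * m⁻¹ ∈ N := hNnorm.conj_mem n⁻¹ (inv_mem hn) m
          have hy := mul_mem hn hx
          rwa [show n * (m * n⁻¹ * m⁻¹) = n * m * n⁻¹ * m⁻¹ by group] at hy
        have h2 : n * m * n⁻¹ * m⁻¹ ∈ M :=
          mul_mem (hMnorm.conj_mem m hm n) (inv_mem hm)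
        have hb : n * m * n⁻¹ * m⁻¹ ∈ N ⊓ M := ⟨h1, h2⟩
        rw [hinf, Subgroup.mem_bot, mul_inv_eq_one, mul_inv_eq_iff_eq_mul] at hb
        exact hb
      have hNab : ∀ a ∈ N, ∀ b ∈ N, a * b = b * a := by
        intro a ha b hb
        have hmem : a * b * a⁻¹ * b⁻¹ ∈ M := by
          rw [← QuotientGroup.eq_one_iff]
          have hcq := myQuotient_comm hM ((a : G) : G ⧸ M) ((b : G) : G ⧸ M)
          rw [QuotientGroup.mk_mul, QuotientGroup.mk_mul, QuotientGroup.mk_mul,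
            QuotientGroup.mk_inv, QuotientGroup.mk_inv, hcq]
          group
        have hNmem : a * b * a⁻¹ * b⁻¹ ∈ N :=
          mul_mem (mul_mem (mul_mem ha hb) (inv_mem ha)) (inv_mem hb)
        have hb1 : a * b * a⁻¹ * b⁻¹ ∈ N ⊓ M := ⟨hNmem, hmem⟩
        rw [hinf, Subgroup.mem_bot, mul_inv_eq_one, mul_inv_eq_iff_eq_mul] at hb1
        exact hb1
      intro n hn
      rw [Subgroup.mem_center_iff]
      intro g
      have hg : g ∈ ((N ⊔ M : Subgroup G) : Set G) := by rw [hsup]; trivial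
      rw [Subgroup.normal_mul] at hg
      obtain ⟨a, ha, m, hm, rfl⟩ := hg
      calc a * m * n = a * (m * n) := by rw [mul_assoc]
        _ = a * (n * m) := by rw [← hcomm n hn m hm]
        _ = a * n * m := by rw [mul_assoc]
        _ = n * a * m := by rw [hNab a ha n hn]
        _ = n * (a * m) := by rw [mul_assoc]
    · exact absurd ((myLe_socle ⟨hNnorm, hNbot, hNmin⟩).trans
        (h M hM (myAbnormal_of_coatom_not_normal hM hMnorm))) hNM
  have hsocle_center : socle G ≤ Subgroup.center G := mySocle_le hcent
  -- Step 2: a minimal supplement of the socle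
  obtain ⟨Hc, hHcS, hHcmin⟩ :=
    Set.Finite.exists_minimalFor id {K : Subgroup G | socle G ⊔ K = ⊤}
      (Set.toFinite _) ⟨⊤, sup_top_eq _⟩
  have hHcS : socle G ⊔ Hc = ⊤ := hHcS
  have hD : socle G ⊓ Hc = ⊥ := by
    by_contra hDne
    obtain ⟨M, hM, hDM⟩ := myExists_coatom_not_le hΦ hDne
    have hsupDM : (socle G ⊓ Hc) ⊔ M = ⊤ :=
      hM.2 _ (lt_of_le_of_ne le_sup_right (fun he => hDM (le_sup_left.trans he.ge)))
    haveI hDnormal : (socle G ⊓ Hc).Normal :=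
      myNormal_of_le_center (inf_le_left.trans hsocle_center)
    have hHle : Hc ≤ socle G ⊔ (Hc ⊓ M) := by
      intro x hx
      have hx2 : x ∈ (((socle G ⊓ Hc) ⊔ M : Subgroup G) : Set G) := by
        rw [hsupDM]; trivial
      rw [Subgroup.normal_mul] at hx2
      obtain ⟨d, hd, m, hm, rfl⟩ := hx2
      have hdH : d ∈ Hc := (inf_le_right : socle G ⊓ Hc ≤ Hc) hd
      have hmH : m ∈ Hc := by
        have := mul_mem (inv_mem hdH) hx
        rwa [inv_mul_cancel_left] at this
      exact mul_mem (Subgroup.mem_sup_left ((inf_le_left : socle G ⊓ Hc ≤ socle G) hd))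
        (Subgroup.mem_sup_right ⟨hmH, hm⟩)
    have hHM : socle G ⊔ (Hc ⊓ M) = ⊤ := by
      apply le_antisymm le_top
      calc (⊤ : Subgroup G) = socle G ⊔ Hc := hHcS.symm
        _ ≤ socle G ⊔ (socle G ⊔ (Hc ⊓ M)) := sup_le_sup_left hHle _
        _ = socle G ⊔ (Hc ⊓ M) := by rw [← sup_assoc, sup_idem]
    have heq : Hc = Hc ⊓ M := le_antisymm (hHcmin hHM inf_le_left) inf_le_left
    exact hDM (inf_le_right.trans (heq.le.trans inf_le_right))
  haveI hsoc_norm : (socle G).Normal := myNormal_of_le_center hsocle_center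
  have hHcnorm : Hc.Normal := by
    constructor
    intro x hx g
    have hg : g ∈ ((socle G ⊔ Hc : Subgroup G) : Set G) := by rw [hHcS]; trivial
    rw [Subgroup.normal_mul] at hg
    obtain ⟨s, hs, k, hk, rfl⟩ := hg
    have hs' := Subgroup.mem_center_iff.mp (hsocle_center hs)
    have hre : s * k * x * (s * k)⁻¹ = k * x * k⁻¹ := by
      rw [mul_inv_rev, show s * k * x * (k⁻¹ * s⁻¹) = s * (k * x * k⁻¹) * s⁻¹ by group,
        ← hs' (k * x * k⁻¹), mul_assoc, mul_inv_cancel, mul_one]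
    rw [hre]
    exact mul_mem (mul_mem hk hx) (inv_mem hk)
  have hHcbot : Hc = ⊥ := by
    by_contra hne
    obtain ⟨N, hN, hNle⟩ := myExists_minimal_normal_le hHcnorm hne
    have hNin : N ≤ socle G ⊓ Hc := le_inf (myLe_socle hN) hNle
    rw [hD] at hNin
    exact hN.2.1 (le_bot_iff.mp hNin)
  have hsocletop : socle G = ⊤ := by
    rw [hHcbot, sup_bot_eq] at hHcS
    exact hHcS
  have hcen : Subgroup.center G = ⊤ :=
    le_antisymm le_top (hsocletop ▸ hsocle_center)
  exact ⟨⟨1, by rw [Subgroup.upperCentralSeries_one]; exact hcen⟩⟩
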